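/- Let G ∈ 𝒢_{m1,m2} (no restriction on the sizes of m1 and m2). Let f_ℓ(G) denote the number of ordered 5-tuples (v1,v2,v3,v4,v5) of distinct vertices of G such that there is a loop at v2, v1v4 and v3v5 are simple edges, and v1v2, v2v3 and v4v5 are non-edges. Then f_ℓ(G) ≥ m1·M·( M − 4·m1 − 8·m2 − 8Δ − 3Δ² ). -/

import Mathlib

open Finset

lemma card_filter_prod_le {α β : Type*} [DecidableEq α] [DecidableEq β]
    (A : Finset α) (B : Finset β) (q : α × β → Prop) [DecidablePred q] (k : ℕ)
    (h : ∀ a ∈ A, (B.filter (fun b => q (a, b))).card ≤ k) :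
    ((A ×ˢ B).filter q).card ≤ A.card * k := by
  rw [mul_comm]
  apply Finset.card_le_mul_card_image_of_maps_to (f := Prod.fst) (t := A)
  · intro x hx
    simp only [mem_filter, mem_product] at hx
    exact hx.1.1
  · intro a ha
    calc (((A ×ˢ B).filter q).filter (fun x => x.1 = a)).card
        ≤ (({a} : Finset α) ×ˢ (B.filter (fun b => q (a, b)))).card := by
          apply Finset.card_le_card
          intro x hx
          simp only [mem_filter, mem_product, mem_singleton] at hx ⊢
          obtain ⟨⟨⟨hA, hB⟩, hq⟩, h1⟩ := hx
          refine ⟨h1, hB, ?_⟩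
          rwa [← h1, Prod.mk.eta]
      _ ≤ k := by
          rw [Finset.card_product, Finset.card_singleton, one_mul]
          exact h a ha

lemma filter_prod_fst {α β : Type*} [DecidableEq α] [DecidableEq β]
    (A : Finset α) (B : Finset β) (p : α → Prop) [DecidablePred p] :
    (A ×ˢ B).filter (fun x => p x.1) = (A.filter p) ×ˢ B := by
  ext x; simp only [mem_filter, mem_product]; tauto

lemma filter_prod_snd {α β : Type*} [DecidableEq α] [DecidableEq β]
    (A : Finset α) (B : Finset β) (p : β → Prop) [DecidablePred p] :
    (A ×ˢ B).filter (fun x => p x.2) = A ×ˢ (B.filter p) := by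
  ext x; simp only [mem_filter, mem_product]; tauto

lemma card_filter_mem_fst {γ : Type*} [DecidableEq γ] (E : Finset (γ × γ)) (s : Finset γ) (Δ : ℕ)
    (h : ∀ v ∈ s, (E.filter (fun e => e.1 = v)).card ≤ Δ) :
    (E.filter (fun e => e.1 ∈ s)).card ≤ s.card * Δ := by
  rw [mul_comm]
  apply Finset.card_le_mul_card_image_of_maps_to (f := Prod.fst) (t := s)
  · intro x hx; exact (mem_filter.mp hx).2
  · intro v hv
    calc ((E.filter (fun e => e.1 ∈ s)).filter (fun e => e.1 = v)).card
        ≤ (E.filter (fun e => e.1 = v)).card := by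
          apply Finset.card_le_card
          intro x hx
          simp only [mem_filter] at hx ⊢
          exact ⟨hx.1.1, hx.2⟩
      _ ≤ Δ := h v hv

lemma card_filter_mem_snd {γ : Type*} [DecidableEq γ] (E : Finset (γ × γ)) (s : Finset γ) (Δ : ℕ)
    (h : ∀ v ∈ s, (E.filter (fun e => e.2 = v)).card ≤ Δ) :
    (E.filter (fun e => e.2 ∈ s)).card ≤ s.card * Δ := by
  rw [mul_comm]
  apply Finset.card_le_mul_card_image_of_maps_to (f := Prod.snd) (t := s)
  · intro x hx; exact (mem_filter.mp hx).2
  · intro v hv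
    calc ((E.filter (fun e => e.2 ∈ s)).filter (fun e => e.2 = v)).card
        ≤ (E.filter (fun e => e.2 = v)).card := by
          apply Finset.card_le_card
          intro x hx
          simp only [mem_filter] at hx ⊢
          exact ⟨hx.1.1, hx.2⟩
      _ ≤ Δ := h v hv

section Graph
variable {n : ℕ} (mG : Fin n → Fin n → ℕ)

/-- neighbourhood of `v` -/
def nbr (v : Fin n) : Finset (Fin n) := univ.filter (fun u => u ≠ v ∧ 1 ≤ mG v u)

lemma nbr_card (d : Fin n → ℕ) (Δ : ℕ) (v : Fin n)
    (hdeg : (∑ u ∈ univ.filter (fun u => u ≠ v), mG v u) + 2 * mG v v = d v)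
    (hΔ : d v ≤ Δ) : (nbr mG v).card ≤ Δ := by
  have h1 : (nbr mG v).card ≤ ∑ u ∈ nbr mG v, mG v u := by
    rw [Finset.card_eq_sum_ones]
    exact Finset.sum_le_sum (fun u hu => (mem_filter.mp hu).2.2)
  have h2 : ∑ u ∈ nbr mG v, mG v u ≤ ∑ u ∈ univ.filter (fun u => u ≠ v), mG v u := by
    apply Finset.sum_le_sum_of_subset
    intro u hu
    simp only [nbr, mem_filter] at hu ⊢
    exact ⟨hu.1, hu.2.1⟩
  omega

/-- ordered simple edges -/
def spairs : Finset (Fin n × Fin n) :=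
  univ.filter (fun p => p.1 ≠ p.2 ∧ mG p.1 p.2 = 1)

lemma spairs_fst_card (Δ : ℕ) (v : Fin n) (h : (nbr mG v).card ≤ Δ) :
    ((spairs mG).filter (fun e => e.1 = v)).card ≤ Δ := by
  refine le_trans (Finset.card_le_card_of_injOn Prod.snd ?_ ?_) h
  · intro e he
    simp only [spairs, mem_coe, mem_filter, mem_univ, true_and, nbr] at he ⊢
    obtain ⟨⟨hne, h1⟩, h2⟩ := he
    subst h2
    exact ⟨fun hc => hne hc.symm, le_of_eq h1.symm⟩
  · intro a ha b hb hab
    simp only [spairs, mem_coe, mem_filter] at ha hb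
    exact Prod.ext (ha.2.trans hb.2.symm) hab

lemma spairs_snd_card (Δ : ℕ) (v : Fin n) (hsymm : ∀ u w, mG u w = mG w u)
    (h : (nbr mG v).card ≤ Δ) :
    ((spairs mG).filter (fun e => e.2 = v)).card ≤ Δ := by
  refine le_trans (Finset.card_le_card_of_injOn Prod.fst ?_ ?_) h
  · intro e he
    simp only [spairs, mem_coe, mem_filter, mem_univ, true_and, nbr] at he ⊢
    obtain ⟨⟨hne, h1⟩, h2⟩ := he
    subst h2
    refine ⟨hne, ?_⟩
    rw [hsymm]
    omega
  · intro a ha b hb hab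
    simp only [spairs, mem_coe, mem_filter] at ha hb
    exact Prod.ext hab (ha.2.trans hb.2.symm)

end Graph

set_option maxHeartbeats 1600000 in
/-- **Unconditional lower bound on the number `f_ℓ(G)` of ℓ-switchings.**
`G ∈ 𝒢_{m1,m2}` (no restriction on `m1`, `m2`).  `f_ℓ(G)` is the number of
ordered 5-tuples `(v1,…,v5)` of distinct vertices with a loop at `v2`,
`v1v4` and `v3v5` simple edges, and `v1v2`, `v2v3`, `v4v5` non-edges.  Then
`f_ℓ(G) ≥ m1·M·(M − 4·m1 − 8·m2 − 8Δ − 3Δ²)`. -/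
theorem fl_lower (n : ℕ) (d : Fin n → ℕ) (mG : Fin n → Fin n → ℕ)
    (M M2 Δ m1 m2 : ℕ)
    (hM : M = ∑ i, d i)
    (hM2 : M2 = ∑ i, d i * (d i - 1))
    (hΔ : Δ = Finset.univ.sup d)
    (hsymm : ∀ u v, mG u v = mG v u)
    (hdeg : ∀ v, (∑ u ∈ Finset.univ.filter (fun u => u ≠ v), mG v u)
        + 2 * mG v v = d v)
    (hloop : ∀ v, mG v v ≤ 1)
    (hmul : ∀ u v, u ≠ v → mG u v ≤ 2)
    (hm1 : m1 = ∑ v, mG v v)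
    (hm2 : 2 * m2 = Set.ncard {q : Fin n × Fin n | q.1 ≠ q.2 ∧ mG q.1 q.2 = 2})
    (fl : ℕ)
    (hfl : fl = Set.ncard {t : Fin 5 → Fin n | Function.Injective t ∧
      1 ≤ mG (t 1) (t 1) ∧
      mG (t 0) (t 3) = 1 ∧ mG (t 2) (t 4) = 1 ∧
      mG (t 0) (t 1) = 0 ∧ mG (t 1) (t 2) = 0 ∧ mG (t 3) (t 4) = 0}) :
    (m1 : ℝ) * M * ((M : ℝ) - 4 * m1 - 8 * m2 - 8 * Δ - 3 * Δ ^ 2) ≤ (fl : ℝ) := by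
  classical
  set F : Finset (Fin 5 → Fin n) := univ.filter (fun t => Function.Injective t ∧
      1 ≤ mG (t 1) (t 1) ∧
      mG (t 0) (t 3) = 1 ∧ mG (t 2) (t 4) = 1 ∧
      mG (t 0) (t 1) = 0 ∧ mG (t 1) (t 2) = 0 ∧ mG (t 3) (t 4) = 0) with hF
  have hFl : fl = F.card := by
    rw [hfl, Set.ncard_eq_toFinset_card', Set.toFinset_setOf]
  clear hfl
  set L : Finset (Fin n) := univ.filter (fun v => 1 ≤ mG v v) with hL
  set E : Finset (Fin n × Fin n) := spairs mG with hE
  set S : ℕ := E.card with hS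
  -- degrees bounded by Δ
  have hdΔ : ∀ v, d v ≤ Δ := by
    intro v; rw [hΔ]; exact Finset.le_sup (mem_univ v)
  have hnbr : ∀ v, (nbr mG v).card ≤ Δ := fun v => nbr_card mG d Δ v (hdeg v) (hdΔ v)
  have hfst : ∀ v, (E.filter (fun e => e.1 = v)).card ≤ Δ :=
    fun v => spairs_fst_card mG Δ v (hnbr v)
  have hsnd : ∀ v, (E.filter (fun e => e.2 = v)).card ≤ Δ :=
    fun v => spairs_snd_card mG Δ v hsymm (hnbr v)
  -- m1 is the number of loop vertices
  have hm1L : m1 = L.card := by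
    rw [hm1, hL, Finset.card_filter]
    exact Finset.sum_congr rfl (fun v _ => by have := hloop v; split_ifs with h <;> omega)
  -- the number of ordered double pairs is 2*m2
  have hD : (univ.filter (fun p : Fin n × Fin n => p.1 ≠ p.2 ∧ mG p.1 p.2 = 2)).card
      = 2 * m2 := by
    rw [hm2, Set.ncard_eq_toFinset_card', Set.toFinset_setOf]
  -- M = S + 4 m2 + 2 m1
  have hMS : M = S + 4 * m2 + 2 * m1 := by
    have e1 : M = (∑ v, ∑ u ∈ univ.filter (fun u => u ≠ v), mG v u) + 2 * m1 := by
      rw [hM, hm1, Finset.mul_sum, ← Finset.sum_add_distrib]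
      exact Finset.sum_congr rfl fun v _ => (hdeg v).symm
    have e2 : (∑ v, ∑ u ∈ univ.filter (fun u => u ≠ v), mG v u)
        = ∑ p : Fin n × Fin n, (if p.2 ≠ p.1 then mG p.1 p.2 else 0) := by
      rw [Fintype.sum_prod_type]
      exact Finset.sum_congr rfl fun v _ => (Finset.sum_filter _ _)
    have e3 : ∀ p : Fin n × Fin n, (if p.2 ≠ p.1 then mG p.1 p.2 else 0)
        = (if p.1 ≠ p.2 ∧ mG p.1 p.2 = 1 then 1 else 0)
          + 2 * (if p.1 ≠ p.2 ∧ mG p.1 p.2 = 2 then 1 else 0) := by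
      intro p
      by_cases h : p.1 = p.2
      · simp [h]
      · have h2 := hmul p.1 p.2 h
        have hne : p.2 ≠ p.1 := fun hc => h hc.symm
        rw [if_pos hne]
        split_ifs with a b c <;> omega
    have e4 : S = ∑ p : Fin n × Fin n, (if p.1 ≠ p.2 ∧ mG p.1 p.2 = 1 then 1 else 0) := by
      rw [hS, hE, spairs, Finset.card_filter]
    have e5 : 2 * m2 = ∑ p : Fin n × Fin n, (if p.1 ≠ p.2 ∧ mG p.1 p.2 = 2 then 1 else 0) := by
      rw [← hD, Finset.card_filter]
    rw [e1, e2]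
    simp_rw [e3]
    rw [Finset.sum_add_distrib, ← Finset.mul_sum, ← e4, ← e5]
    ring
  -- fl as a Finset card
  -- the product set
  set P : Finset (Fin n × ((Fin n × Fin n) × (Fin n × Fin n))) := L ×ˢ (E ×ˢ E) with hP
  have hPcard : P.card = m1 * (S * S) := by
    rw [hP, Finset.card_product, Finset.card_product, hm1L]
  -- good triples
  set good : Fin n × ((Fin n × Fin n) × (Fin n × Fin n)) → Prop := fun x =>
    x.2.1.1 ≠ x.1 ∧ x.1 ≠ x.2.2.1 ∧ x.1 ≠ x.2.1.2 ∧ x.1 ≠ x.2.2.2 ∧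
    x.2.1.1 ≠ x.2.2.1 ∧ x.2.1.1 ≠ x.2.2.2 ∧ x.2.2.1 ≠ x.2.1.2 ∧ x.2.1.2 ≠ x.2.2.2 ∧
    mG x.2.1.1 x.1 = 0 ∧ mG x.1 x.2.2.1 = 0 ∧ mG x.2.1.2 x.2.2.2 = 0 with hgood
  -- good triples inject into F
  have hGF : (P.filter good).card ≤ fl := by
    rw [hFl]
    apply Finset.card_le_card_of_injOn
      (fun x => ![x.2.1.1, x.1, x.2.2.1, x.2.1.2, x.2.2.2])
    · intro x hx
      rw [mem_coe, mem_filter] at hx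
      obtain ⟨hxP, hxg⟩ := hx
      rw [hP, mem_product, mem_product] at hxP
      obtain ⟨hxL, hx1, hx2⟩ := hxP
      rw [hL, mem_filter] at hxL
      rw [hE, spairs, mem_filter] at hx1 hx2
      rw [hgood] at hxg
      obtain ⟨g1, g2, g3, g4, g5, g6, g7, g8, g9, g10, g11⟩ := hxg
      rw [mem_coe, hF, mem_filter]
      refine ⟨mem_univ _, ?_, ?_, ?_, ?_, ?_, ?_, ?_⟩
      · intro i j hij
        fin_cases i <;> fin_cases j <;>
          simp_all [Matrix.cons_val_zero, Matrix.cons_val_one, Matrix.head_cons]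
      · simpa using hxL.2
      · simpa using hx1.2.2
      · simpa using hx2.2.2
      · simpa using g9
      · simpa using g10
      · simpa using g11
    · intro a _ b _ h
      have e0 : a.2.1.1 = b.2.1.1 := by simpa using congrFun h 0
      have e1 : a.1 = b.1 := by simpa using congrFun h 1
      have e2 : a.2.2.1 = b.2.2.1 := by simpa using congrFun h 2
      have e3 : a.2.1.2 = b.2.1.2 := by simpa using congrFun h 3
      have e4 : a.2.2.2 = b.2.2.2 := by simpa using congrFun h 4
      exact Prod.ext e1 (Prod.ext (Prod.ext e0 e3) (Prod.ext e2 e4))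
  -- bad events
  set q1 : Fin n × ((Fin n × Fin n) × (Fin n × Fin n)) → Prop := fun x =>
    x.2.1.1 = x.1 ∨ x.2.1.2 = x.1 with hq1
  set q2 : Fin n × ((Fin n × Fin n) × (Fin n × Fin n)) → Prop := fun x =>
    x.2.2.1 = x.1 ∨ x.2.2.2 = x.1 with hq2
  set q3 : Fin n × ((Fin n × Fin n) × (Fin n × Fin n)) → Prop := fun x =>
    x.2.2.1 = x.2.1.1 ∨ x.2.2.1 = x.2.1.2 ∨ x.2.2.2 = x.2.1.1 ∨ x.2.2.2 = x.2.1.2 with hq3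
  set q4 : Fin n × ((Fin n × Fin n) × (Fin n × Fin n)) → Prop := fun x =>
    x.2.1.1 ≠ x.1 ∧ 1 ≤ mG x.2.1.1 x.1 with hq4
  set q5 : Fin n × ((Fin n × Fin n) × (Fin n × Fin n)) → Prop := fun x =>
    x.2.2.1 ≠ x.1 ∧ 1 ≤ mG x.2.2.1 x.1 with hq5
  set q6 : Fin n × ((Fin n × Fin n) × (Fin n × Fin n)) → Prop := fun x =>
    x.2.2.2 ≠ x.2.1.2 ∧ 1 ≤ mG x.2.1.2 x.2.2.2 with hq6
  -- covering
  have hcover : P.card ≤ (P.filter good).card + ((P.filter q1).card + (P.filter q2).card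
      + (P.filter q3).card + (P.filter q4).card + (P.filter q5).card
      + (P.filter q6).card) := by
    have hsub : P ⊆ P.filter good ∪ (P.filter q1 ∪ P.filter q2 ∪ P.filter q3
        ∪ P.filter q4 ∪ P.filter q5 ∪ P.filter q6) := by
      intro x hx
      by_cases hg : good x
      · exact mem_union_left _ (mem_filter.mpr ⟨hx, hg⟩)
      · have hq : q1 x ∨ q2 x ∨ q3 x ∨ q4 x ∨ q5 x ∨ q6 x := by
          by_contra hcon
          push_neg at hcon
          obtain ⟨n1, n2, n3, n4, n5, n6⟩ := hcon
          apply hg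
          simp only [hq1, not_or] at n1
          simp only [hq2, not_or] at n2
          simp only [hq3, not_or] at n3
          simp only [hq4, not_and, not_le] at n4
          simp only [hq5, not_and, not_le] at n5
          simp only [hq6, not_and, not_le] at n6
          rw [hgood]
          refine ⟨n1.1, Ne.symm n2.1, Ne.symm n1.2, Ne.symm n2.2, Ne.symm n3.1,
            Ne.symm n3.2.2.1, n3.2.1, Ne.symm n3.2.2.2, ?_, ?_, ?_⟩
          · have := n4 n1.1; omega
          · have := n5 n2.1; rw [hsymm]; omega
          · have := n6 n3.2.2.2; omega
        rcases hq with h | h | h | h | h | h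
        · exact mem_union_right _ (mem_union_left _ (mem_union_left _ (mem_union_left _
            (mem_union_left _ (mem_union_left _ (mem_filter.mpr ⟨hx, h⟩))))))
        · exact mem_union_right _ (mem_union_left _ (mem_union_left _ (mem_union_left _
            (mem_union_left _ (mem_union_right _ (mem_filter.mpr ⟨hx, h⟩))))))
        · exact mem_union_right _ (mem_union_left _ (mem_union_left _ (mem_union_left _
            (mem_union_right _ (mem_filter.mpr ⟨hx, h⟩)))))
        · exact mem_union_right _ (mem_union_left _ (mem_union_left _
            (mem_union_right _ (mem_filter.mpr ⟨hx, h⟩))))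
        · exact mem_union_right _ (mem_union_left _
            (mem_union_right _ (mem_filter.mpr ⟨hx, h⟩)))
        · exact mem_union_right _ (mem_union_right _ (mem_filter.mpr ⟨hx, h⟩))
    refine (Finset.card_le_card hsub).trans ?_
    refine (Finset.card_union_le _ _).trans ?_
    have u1 := Finset.card_union_le (P.filter q1 ∪ P.filter q2 ∪ P.filter q3
        ∪ P.filter q4 ∪ P.filter q5) (P.filter q6)
    have u2 := Finset.card_union_le (P.filter q1 ∪ P.filter q2 ∪ P.filter q3
        ∪ P.filter q4) (P.filter q5)
    have u3 := Finset.card_union_le (P.filter q1 ∪ P.filter q2 ∪ P.filter q3) (P.filter q4)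
    have u4 := Finset.card_union_le (P.filter q1 ∪ P.filter q2) (P.filter q3)
    have u5 := Finset.card_union_le (P.filter q1) (P.filter q2)
    omega
  have hB1 : (P.filter q1).card ≤ m1 * (2 * Δ * S) := by
    rw [hP, hm1L]
    apply card_filter_prod_le
    intro a _
    have hfe : ((E ×ˢ E).filter (fun b => q1 (a, b)))
        = (E.filter (fun e => e.1 = a ∨ e.2 = a)) ×ˢ E := by
      simp only [hq1]
      exact filter_prod_fst E E (fun e => e.1 = a ∨ e.2 = a)
    rw [hfe, Finset.card_product]
    have hb : (E.filter (fun e => e.1 = a ∨ e.2 = a)).card ≤ 2 * Δ := by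
      rw [Finset.filter_or]
      refine (Finset.card_union_le _ _).trans ?_
      have := hfst a; have := hsnd a; omega
    exact Nat.mul_le_mul_right S hb
  have hB2 : (P.filter q2).card ≤ m1 * (S * (2 * Δ)) := by
    rw [hP, hm1L]
    apply card_filter_prod_le
    intro a _
    have hfe : ((E ×ˢ E).filter (fun b => q2 (a, b)))
        = E ×ˢ (E.filter (fun e => e.1 = a ∨ e.2 = a)) := by
      simp only [hq2]
      exact filter_prod_snd E E (fun e => e.1 = a ∨ e.2 = a)
    rw [hfe, Finset.card_product]
    have hb : (E.filter (fun e => e.1 = a ∨ e.2 = a)).card ≤ 2 * Δ := by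
      rw [Finset.filter_or]
      refine (Finset.card_union_le _ _).trans ?_
      have := hfst a; have := hsnd a; omega
    exact Nat.mul_le_mul_left S hb
  have hB3 : (P.filter q3).card ≤ m1 * (S * (4 * Δ)) := by
    rw [hP, hm1L]
    have hfe : ((L ×ˢ (E ×ˢ E)).filter q3)
        = L ×ˢ ((E ×ˢ E).filter (fun b =>
            b.2.1 = b.1.1 ∨ b.2.1 = b.1.2 ∨ b.2.2 = b.1.1 ∨ b.2.2 = b.1.2)) := by
      simp only [hq3]
      exact filter_prod_snd L (E ×ˢ E)
        (fun b => b.2.1 = b.1.1 ∨ b.2.1 = b.1.2 ∨ b.2.2 = b.1.1 ∨ b.2.2 = b.1.2)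
    rw [hfe, Finset.card_product]
    refine Nat.mul_le_mul_left _ ?_
    apply card_filter_prod_le
    intro e1 _
    rw [Finset.filter_or, Finset.filter_or, Finset.filter_or]
    refine (Finset.card_union_le _ _).trans ?_
    have u1 := Finset.card_union_le (E.filter (fun e => e.1 = e1.2))
      (E.filter (fun e => e.2 = e1.1) ∪ E.filter (fun e => e.2 = e1.2))
    have u2 := Finset.card_union_le (E.filter (fun e => e.2 = e1.1))
      (E.filter (fun e => e.2 = e1.2))
    have r1 : (E.filter (fun b : Fin n × Fin n => (e1, b).2.1 = (e1, b).1.1))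
        = E.filter (fun e => e.1 = e1.1) := rfl
    have r2 : (E.filter (fun b : Fin n × Fin n => (e1, b).2.1 = (e1, b).1.2))
        = E.filter (fun e => e.1 = e1.2) := rfl
    have r3 : (E.filter (fun b : Fin n × Fin n => (e1, b).2.2 = (e1, b).1.1))
        = E.filter (fun e => e.2 = e1.1) := rfl
    have r4 : (E.filter (fun b : Fin n × Fin n => (e1, b).2.2 = (e1, b).1.2))
        = E.filter (fun e => e.2 = e1.2) := rfl
    rw [r1, r2, r3, r4]
    have := hfst e1.1; have := hfst e1.2; have := hsnd e1.1; have := hsnd e1.2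
    omega
  have hB4 : (P.filter q4).card ≤ m1 * (Δ * Δ * S) := by
    rw [hP, hm1L]
    apply card_filter_prod_le
    intro a _
    have hfe : ((E ×ˢ E).filter (fun b => q4 (a, b)))
        = (E.filter (fun e => e.1 ≠ a ∧ 1 ≤ mG e.1 a)) ×ˢ E := by
      simp only [hq4]
      exact filter_prod_fst E E (fun e => e.1 ≠ a ∧ 1 ≤ mG e.1 a)
    rw [hfe, Finset.card_product]
    refine Nat.mul_le_mul_right S ?_
    calc (E.filter (fun e => e.1 ≠ a ∧ 1 ≤ mG e.1 a)).card
        ≤ (E.filter (fun e => e.1 ∈ nbr mG a)).card := by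
          apply Finset.card_le_card
          intro e he
          rw [mem_filter] at he ⊢
          refine ⟨he.1, ?_⟩
          simp only [nbr, mem_filter, mem_univ, true_and]
          exact ⟨he.2.1, by rw [hsymm]; exact he.2.2⟩
      _ ≤ (nbr mG a).card * Δ := card_filter_mem_fst E (nbr mG a) Δ (fun v _ => hfst v)
      _ ≤ Δ * Δ := Nat.mul_le_mul_right Δ (hnbr a)
  have hB5 : (P.filter q5).card ≤ m1 * (S * (Δ * Δ)) := by
    rw [hP, hm1L]
    apply card_filter_prod_le
    intro a _
    have hfe : ((E ×ˢ E).filter (fun b => q5 (a, b)))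
        = E ×ˢ (E.filter (fun e => e.1 ≠ a ∧ 1 ≤ mG e.1 a)) := by
      simp only [hq5]
      exact filter_prod_snd E E (fun e => e.1 ≠ a ∧ 1 ≤ mG e.1 a)
    rw [hfe, Finset.card_product]
    refine Nat.mul_le_mul_left S ?_
    calc (E.filter (fun e => e.1 ≠ a ∧ 1 ≤ mG e.1 a)).card
        ≤ (E.filter (fun e => e.1 ∈ nbr mG a)).card := by
          apply Finset.card_le_card
          intro e he
          rw [mem_filter] at he ⊢
          refine ⟨he.1, ?_⟩
          simp only [nbr, mem_filter, mem_univ, true_and]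
          exact ⟨he.2.1, by rw [hsymm]; exact he.2.2⟩
      _ ≤ (nbr mG a).card * Δ := card_filter_mem_fst E (nbr mG a) Δ (fun v _ => hfst v)
      _ ≤ Δ * Δ := Nat.mul_le_mul_right Δ (hnbr a)
  have hB6 : (P.filter q6).card ≤ m1 * (S * (Δ * Δ)) := by
    rw [hP, hm1L]
    have hfe : ((L ×ˢ (E ×ˢ E)).filter q6)
        = L ×ˢ ((E ×ˢ E).filter (fun b => b.2.2 ≠ b.1.2 ∧ 1 ≤ mG b.1.2 b.2.2)) := by
      simp only [hq6]
      exact filter_prod_snd L (E ×ˢ E) (fun b => b.2.2 ≠ b.1.2 ∧ 1 ≤ mG b.1.2 b.2.2)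
    rw [hfe, Finset.card_product]
    refine Nat.mul_le_mul_left _ ?_
    apply card_filter_prod_le
    intro e1 _
    calc (E.filter (fun e2 => e2.2 ≠ e1.2 ∧ 1 ≤ mG e1.2 e2.2)).card
        ≤ (E.filter (fun e2 => e2.2 ∈ nbr mG e1.2)).card := by
          apply Finset.card_le_card
          intro e he
          rw [mem_filter] at he ⊢
          refine ⟨he.1, ?_⟩
          simp only [nbr, mem_filter, mem_univ, true_and]
          exact ⟨he.2.1, he.2.2⟩
      _ ≤ (nbr mG e1.2).card * Δ := card_filter_mem_snd E (nbr mG e1.2) Δ (fun v _ => hsnd v)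
      _ ≤ Δ * Δ := Nat.mul_le_mul_right Δ (hnbr e1.2)
  -- the natural-number inequality
  have hNat : m1 * (S * S) ≤ fl + (m1 * (2 * Δ * S) + m1 * (2 * Δ * S) + m1 * (S * (4 * Δ))
      + m1 * (Δ * Δ * S) + m1 * (Δ * Δ * S) + m1 * (S * (Δ * Δ))) := by
    calc m1 * (S * S) = P.card := hPcard.symm
      _ ≤ _ := hcover
      _ ≤ _ := by linarith [hGF, hB1, hB2, hB3, hB4, hB5, hB6]
  -- pass to the reals
  have hNatR : (m1 : ℝ) * (S * S) ≤ (fl : ℝ) + (m1 : ℝ) * S * (8 * Δ + 3 * Δ ^ 2) := by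
    have h := (Nat.cast_le (α := ℝ)).mpr hNat
    push_cast at h
    nlinarith [h]
  have hMR : (M : ℝ) = (S : ℝ) + 4 * m2 + 2 * m1 := by exact_mod_cast hMS
  have h0 : (0:ℝ) ≤ (m1:ℝ) := Nat.cast_nonneg _
  have h2 : (0:ℝ) ≤ (m2:ℝ) := Nat.cast_nonneg _
  have h3 : (0:ℝ) ≤ (Δ:ℝ) := Nat.cast_nonneg _
  have h4 : (0:ℝ) ≤ (S:ℝ) := Nat.cast_nonneg _
  have ha : (0:ℝ) ≤ 2*(m1:ℝ) + 4*m2 := by linarith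
  have hc : (0:ℝ) ≤ 8*(Δ:ℝ) + 3*Δ^2 := by positivity
  rw [hMR]
  nlinarith [hNatR, mul_nonneg h0 (mul_nonneg ha ha), mul_nonneg h0 (mul_nonneg ha hc)]
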